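/- Let V be a finite-dimensional vector space over a field K equipped with a nondegenerate bilinear form B, and let κ be the (unique) linear endomorphism of V with B(u, v) = B(v, κu) for all u, v ∈ V. Let φ be a linear endomorphism of V, and let ℓ and r be the (unique) endomorphisms satisfying B(ℓu, v) = B(u, φv) and B(u, rv) = B(φu, v) for all u, v ∈ V (the left and right adjoints of φ). Then ℓ = r if and only if κ ∘ φ = φ ∘ κ. -/
import Mathlib


/-- Let `V` be a finite-dimensional vector space over a field `K` with a nondegenerate
bilinear form `B` (its induced map `V → V*` is bijective), and let `κ` be the unique
endomorphism with `B(u, v) = B(v, κu)` for all `u, v`. If `ℓ` and `r` are the left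
and right adjoints of an endomorphism `φ` (so `B(ℓu, v) = B(u, φv)` and
`B(u, rv) = B(φu, v)` for all `u, v`), then `ℓ = r` iff `κ ∘ φ = φ ∘ κ`. -/
theorem left_adjoint_eq_right_adjoint_iff_commutes_with_canonical
    (K V : Type*) [Field K] [AddCommGroup V] [Module K V] [FiniteDimensional K V]
    (B : V →ₗ[K] V →ₗ[K] K)
    (hB : Function.Bijective (B : V → V →ₗ[K] K))
    (κ : V →ₗ[K] V) (hκ : ∀ u v : V, B u v = B v (κ u))
    (φ ℓ r : V →ₗ[K] V)
    (hℓ : ∀ u v : V, B (ℓ u) v = B u (φ v))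
    (hr : ∀ u v : V, B u (r v) = B (φ u) v) :
    ℓ = r ↔ κ ∘ₗ φ = φ ∘ₗ κ := by
  -- left nondegeneracy
  have hleft : ∀ u : V, (∀ v, B u v = 0) → u = 0 := by
    intro u hu
    have h0 : B u = B 0 := by
      ext v; simp [hu v]
    exact hB.1 h0
  -- κ is injective, hence surjective
  have hκinj : Function.Injective κ := by
    intro a b hab
    rw [← sub_eq_zero]
    apply hleft
    intro v
    rw [hκ (a - b) v, map_sub, hab, sub_self, map_zero]
  have hκsurj : Function.Surjective κ :=
    (LinearMap.injective_iff_surjective).mp hκinj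
  -- right nondegeneracy
  have hright : ∀ x : V, (∀ v, B v x = 0) → x = 0 := by
    intro x hx
    obtain ⟨u, rfl⟩ := hκsurj x
    have hu : u = 0 := by
      apply hleft
      intro v
      rw [hκ u v]
      exact hx v
    rw [hu, map_zero]
  have hright' : ∀ x y : V, (∀ v, B v x = B v y) → x = y := by
    intro x y h
    rw [← sub_eq_zero]
    apply hright
    intro v
    rw [map_sub, h v, sub_self]
  -- the key chain of equalities
  have key1 : ∀ u v : V, B v (κ (φ u)) = B u (r v) := by
    intro u v
    rw [← hκ (φ u) v, ← hr u v]
  have key2 : ∀ u v : V, B v (φ (κ u)) = B u (ℓ v) := by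
    intro u v
    rw [← hℓ v (κ u), ← hκ u (ℓ v)]
  constructor
  · intro h
    ext u
    apply hright'
    intro v
    simp only [LinearMap.comp_apply]
    rw [key1 u v, key2 u v, h]
  · intro h
    ext v
    apply hright'
    intro u
    rw [← key2 u v, ← key1 u v]
    have := congrArg (fun f : V →ₗ[K] V => f u) h
    simp only [LinearMap.comp_apply] at this
    rw [this]
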